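/- Let N ≥ 2 and let X ⊆ [0,1] be a Borel set that is S_N-saturated. Then for any N-adic rationals d₁, d₂ with 0 < d₁ < d₂ < 1, one has λ(X ∩ [d₁, d₂]) = λ(X ∩ [0, d₂ − d₁]). -/

import Mathlib

/-- A real number is an `N`-adic rational if it equals `k / N^m` for some `k : ℤ`, `m : ℕ`. -/
def IsNAdic (N : ℕ) (x : ℝ) : Prop :=
  ∃ (k : ℤ) (m : ℕ), x = (k : ℝ) / (N : ℝ) ^ m

/-- Membership (as a map of `[0,1]`) in the generalized Thompson group `F(N)`:
`f 0 = 0`, `f 1 = 1`, and there is a finite partition `0 = a 0 < a 1 < ⋯ < a n = 1`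
of `[0,1]` by `N`-adic rationals such that on each piece `[a i, a (i+1)]` the map `f`
is affine with slope an integer power of `N`.  (Such an `f` is automatically an
increasing piecewise-linear homeomorphism of `[0,1]` onto itself, with all
non-differentiability points `N`-adic.) -/
def InFN (N : ℕ) (f : ℝ → ℝ) : Prop :=
  f 0 = 0 ∧ f 1 = 1 ∧
    ∃ (n : ℕ) (a : ℕ → ℝ), 0 < n ∧ a 0 = 0 ∧ a n = 1 ∧
      (∀ i < n, a i < a (i + 1)) ∧
      (∀ i ≤ n, IsNAdic N (a i)) ∧
      (∀ i < n, ∃ q : ℤ, ∀ x ∈ Set.Icc (a i) (a (i + 1)),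
        f x = f (a i) + (N : ℝ) ^ q * (x - a i))

/-- A set `X ⊆ [0,1]` is `S_N`-saturated if for every `x ∈ X` and every `f ∈ F(N)`
differentiable at `x` with `f'(x) = 1`, one has `f(x) ∈ X`. -/
def SNSaturated (N : ℕ) (X : Set ℝ) : Prop :=
  ∀ x ∈ X, ∀ f : ℝ → ℝ, InFN N f → HasDerivAt f 1 x → f x ∈ X

open MeasureTheory Set

namespace S9

noncomputable def fup (N p : ℕ) : ℝ → ℝ := fun x =>
  if x < ((N:ℝ)^p)⁻¹ then N * x
  else if x < 1 - N * ((N:ℝ)^p)⁻¹ then x + (N - 1) * ((N:ℝ)^p)⁻¹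
  else 1 + (x - 1) / N

noncomputable def fdn (N p : ℕ) : ℝ → ℝ := fun x =>
  if x < N * ((N:ℝ)^p)⁻¹ then x / N
  else if x < 1 - ((N:ℝ)^p)⁻¹ then x - (N - 1) * ((N:ℝ)^p)⁻¹
  else 1 + (x - 1) * N

variable {N p : ℕ}

lemma Nbig (hN : 2 ≤ N) (hp : 2 ≤ p) : (N:ℝ) + 1 < (N:ℝ)^p := by
  have h2 : (2:ℝ) ≤ (N:ℝ) := by exact_mod_cast hN
  calc (N:ℝ) + 1 < (N:ℝ) * (N:ℝ) := by nlinarith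
  _ ≤ (N:ℝ)^p := by
      calc (N:ℝ) * (N:ℝ) = (N:ℝ)^2 := by ring
      _ ≤ (N:ℝ)^p := pow_le_pow_right₀ (by linarith) hp

lemma Apos (hN : 2 ≤ N) : 0 < ((N:ℝ)^p)⁻¹ := by
  have h2 : (2:ℝ) ≤ (N:ℝ) := by exact_mod_cast hN
  positivity

lemma fup_inFN (hN : 2 ≤ N) (hp : 2 ≤ p) : InFN N (fup N p) := by
  set A : ℝ := ((N:ℝ)^p)⁻¹ with hA
  have h2 : (2:ℝ) ≤ (N:ℝ) := by exact_mod_cast hN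
  have hApos : 0 < A := Apos hN
  have hbig : (N:ℝ) + 1 < (N:ℝ)^p := Nbig hN hp
  have hAcancel : (N:ℝ)^p * A = 1 := by rw [hA]; exact mul_inv_cancel₀ (by positivity)
  have hAlt : ((N:ℝ)+1) * A < 1 := by nlinarith
  have hNA : A < 1 - (N:ℝ) * A := by nlinarith
  have hNA1 : 1 - (N:ℝ)*A < 1 := by nlinarith
  have hf0 : fup N p 0 = 0 := by
    simp only [fup]; rw [if_pos hApos]; ring
  have hfA : fup N p A = A + (N - 1) * A := by
    simp only [fup]; rw [if_neg (lt_irrefl A), if_pos hNA]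
  have hfB : fup N p (1 - N*A) = 1 - A := by
    simp only [fup]
    rw [if_neg (by push_neg; linarith), if_neg (by push_neg; exact le_of_eq (by rw [hA]))]
    field_simp
    ring
  refine ⟨hf0, ?_, 3,
    (fun i => match i with | 0 => 0 | 1 => A | 2 => 1 - N*A | _ => 1),
    by norm_num, rfl, rfl, ?_, ?_, ?_⟩
  · simp only [fup]
    rw [if_neg (by push_neg; linarith), if_neg (by push_neg; nlinarith)]
    ring
  · intro i hi
    interval_cases i
    · exact hApos
    · exact hNA
    · exact hNA1
  · intro i hi
    interval_cases i
    · exact ⟨0, 0, by norm_num⟩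
    · exact ⟨1, p, by rw [hA]; push_cast; rw [one_div]⟩
    · refine ⟨(N:ℤ)^p - N, p, ?_⟩
      have hNp : ((N:ℝ))^p ≠ 0 := by positivity
      rw [hA]; push_cast; field_simp
    · exact ⟨1, 0, by norm_num⟩
  · intro i hi
    interval_cases i
    · refine ⟨1, fun x hx => ?_⟩
      show fup N p x = fup N p 0 + (N:ℝ)^(1:ℤ) * (x - 0)
      rw [hf0, zpow_one]
      rcases lt_or_eq_of_le hx.2 with h | h
      · simp only [fup]; rw [if_pos (show x < ((N:ℝ)^p)⁻¹ from h)]; ring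
      · rw [show x = A from h, hfA]; ring
    · refine ⟨0, fun x hx => ?_⟩
      show fup N p x = fup N p A + (N:ℝ)^(0:ℤ) * (x - A)
      rw [hfA, zpow_zero]
      rcases lt_or_eq_of_le hx.2 with h | h
      · simp only [fup]
        rw [if_neg (by push_neg; exact hx.1), if_pos (show x < 1 - (N:ℝ) * ((N:ℝ)^p)⁻¹ from h)]; ring
      · rw [show x = 1 - (N:ℝ)*A from h, hfB]; ring
    · refine ⟨-1, fun x hx => ?_⟩
      show fup N p x = fup N p (1 - N*A) + (N:ℝ)^(-1:ℤ) * (x - (1 - N*A))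
      rw [hfB]
      have hx1 : 1 - (N:ℝ)*A ≤ x := hx.1
      have hx2 : x ≤ 1 := hx.2
      simp only [fup]
      rw [if_neg (by push_neg; linarith), if_neg (by push_neg; exact hx1)]
      have hN0 : (N:ℝ) ≠ 0 := by linarith
      rw [zpow_neg, zpow_one]
      field_simp
      ring

lemma fdn_inFN (hN : 2 ≤ N) (hp : 2 ≤ p) : InFN N (fdn N p) := by
  set A : ℝ := ((N:ℝ)^p)⁻¹ with hA
  have h2 : (2:ℝ) ≤ (N:ℝ) := by exact_mod_cast hN
  have hApos : 0 < A := Apos hN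
  have hbig : (N:ℝ) + 1 < (N:ℝ)^p := Nbig hN hp
  have hAcancel : (N:ℝ)^p * A = 1 := by rw [hA]; exact mul_inv_cancel₀ (by positivity)
  have hAlt : ((N:ℝ)+1) * A < 1 := by nlinarith
  have hNA : (N:ℝ) * A < 1 - A := by nlinarith
  have hNA1 : 1 - A < 1 := by nlinarith
  have hNApos : 0 < (N:ℝ) * A := by positivity
  have hN0 : (N:ℝ) ≠ 0 := by linarith
  have hf0 : fdn N p 0 = 0 := by
    simp only [fdn]; rw [if_pos hNApos]; ring
  have hfA : fdn N p ((N:ℝ)*A) = A := by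
    simp only [fdn]; rw [if_neg (lt_irrefl _), if_pos hNA]; ring
  have hfB : fdn N p (1 - A) = 1 - (N:ℝ)*A := by
    simp only [fdn]
    rw [if_neg (by push_neg; linarith), if_neg (by push_neg; exact le_of_eq (by rw [hA]))]
    ring
  refine ⟨hf0, ?_, 3,
    (fun i => match i with | 0 => 0 | 1 => (N:ℝ)*A | 2 => 1 - A | _ => 1),
    by norm_num, rfl, rfl, ?_, ?_, ?_⟩
  · simp only [fdn]
    rw [if_neg (by push_neg; linarith), if_neg (by push_neg; linarith)]
    ring
  · intro i hi
    interval_cases i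
    · exact hNApos
    · exact hNA
    · exact hNA1
  · intro i hi
    interval_cases i
    · exact ⟨0, 0, by norm_num⟩
    · exact ⟨(N:ℤ), p, by rw [hA]; push_cast; rw [div_eq_mul_inv]⟩
    · refine ⟨(N:ℤ)^p - 1, p, ?_⟩
      have hNp : ((N:ℝ))^p ≠ 0 := by positivity
      rw [hA]; push_cast; field_simp
    · exact ⟨1, 0, by norm_num⟩
  · intro i hi
    interval_cases i
    · refine ⟨-1, fun x hx => ?_⟩
      have hx1 : (0:ℝ) ≤ x := hx.1
      have hx2 : x ≤ (N:ℝ)*A := hx.2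
      show fdn N p x = fdn N p 0 + (N:ℝ)^(-1:ℤ) * (x - 0)
      rw [hf0, zpow_neg, zpow_one]
      rcases lt_or_eq_of_le hx2 with h | h
      · simp only [fdn]; rw [if_pos h]; field_simp; ring
      · rw [h, hfA]; field_simp; ring
    · refine ⟨0, fun x hx => ?_⟩
      have hx1 : (N:ℝ)*A ≤ x := hx.1
      have hx2 : x ≤ 1 - A := hx.2
      show fdn N p x = fdn N p ((N:ℝ)*A) + (N:ℝ)^(0:ℤ) * (x - (N:ℝ)*A)
      rw [hfA, zpow_zero]
      rcases lt_or_eq_of_le hx2 with h | h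
      · simp only [fdn]
        rw [if_neg (by push_neg; exact hx1), if_pos h]; ring
      · rw [h, hfB]; ring
    · refine ⟨1, fun x hx => ?_⟩
      have hx1 : 1 - A ≤ x := hx.1
      have hx2 : x ≤ 1 := hx.2
      show fdn N p x = fdn N p (1 - A) + (N:ℝ)^(1:ℤ) * (x - (1 - A))
      rw [hfB, zpow_one]
      simp only [fdn]
      rw [if_neg (by push_neg; linarith), if_neg (by push_neg; exact hx1)]
      ring

variable {X : Set ℝ}

lemma step_up (hN : 2 ≤ N) (hp : 2 ≤ p) (hXsat : SNSaturated N X)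
    {x : ℝ} (hx : x ∈ X) (hx1 : ((N:ℝ)^p)⁻¹ < x) (hx2 : x < 1 - N * ((N:ℝ)^p)⁻¹) :
    x + ((N:ℝ) - 1) * ((N:ℝ)^p)⁻¹ ∈ X := by
  set A : ℝ := ((N:ℝ)^p)⁻¹ with hA
  have heq : ∀ y ∈ Ioo A (1 - (N:ℝ)*A), fup N p y = y + ((N:ℝ) - 1) * A := by
    intro y hy
    simp only [fup]
    rw [if_neg (by push_neg; exact le_of_lt hy.1), if_pos hy.2]
  have hmem : Ioo A (1 - (N:ℝ)*A) ∈ nhds x := Ioo_mem_nhds hx1 hx2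
  have hd : HasDerivAt (fup N p) 1 x := by
    refine HasDerivAt.congr_of_eventuallyEq ?_ (Filter.eventuallyEq_of_mem hmem heq)
    simpa using (hasDerivAt_id x).add_const (((N:ℝ) - 1) * A)
  have := hXsat x hx (fup N p) (fup_inFN hN hp) hd
  rwa [heq x ⟨hx1, hx2⟩] at this

lemma step_dn (hN : 2 ≤ N) (hp : 2 ≤ p) (hXsat : SNSaturated N X)
    {x : ℝ} (hx : x ∈ X) (hx1 : (N:ℝ) * ((N:ℝ)^p)⁻¹ < x) (hx2 : x < 1 - ((N:ℝ)^p)⁻¹) :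
    x - ((N:ℝ) - 1) * ((N:ℝ)^p)⁻¹ ∈ X := by
  set A : ℝ := ((N:ℝ)^p)⁻¹ with hA
  have heq : ∀ y ∈ Ioo ((N:ℝ)*A) (1 - A), fdn N p y = y - ((N:ℝ) - 1) * A := by
    intro y hy
    simp only [fdn]
    rw [if_neg (by push_neg; exact le_of_lt hy.1), if_pos hy.2]
  have hmem : Ioo ((N:ℝ)*A) (1 - A) ∈ nhds x := Ioo_mem_nhds hx1 hx2
  have hd : HasDerivAt (fdn N p) 1 x := by
    refine HasDerivAt.congr_of_eventuallyEq ?_ (Filter.eventuallyEq_of_mem hmem heq)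
    simpa using (hasDerivAt_id x).sub_const (((N:ℝ) - 1) * A)
  have := hXsat x hx (fdn N p) (fdn_inFN hN hp) hd
  rwa [heq x ⟨hx1, hx2⟩] at this

lemma chain_up (hN : 2 ≤ N) (hp : 2 ≤ p) (hXsat : SNSaturated N X) (j : ℕ) :
    ∀ x ∈ X, ((N:ℝ)^p)⁻¹ < x → x + (j:ℝ) * (((N:ℝ) - 1) * ((N:ℝ)^p)⁻¹) ≤ 1 - N * ((N:ℝ)^p)⁻¹ →
    x + (j:ℝ) * (((N:ℝ) - 1) * ((N:ℝ)^p)⁻¹) ∈ X := by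
  set A : ℝ := ((N:ℝ)^p)⁻¹ with hA
  have h2 : (2:ℝ) ≤ (N:ℝ) := by exact_mod_cast hN
  have hApos : 0 < A := Apos hN
  have hgpos : 0 < ((N:ℝ) - 1) * A := by nlinarith
  induction j with
  | zero => intro x hx _ _; simpa using hx
  | succ j ih =>
    intro x hx hx1 hx2
    push_cast at hx2 ⊢
    have hmid : x + (j:ℝ) * (((N:ℝ) - 1) * A) ≤ 1 - N * A - ((N:ℝ) - 1) * A := by
      nlinarith
    have hy : x + (j:ℝ) * (((N:ℝ) - 1) * A) ∈ X := ih x hx hx1 (by nlinarith)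
    have := step_up hN hp hXsat hy (by nlinarith) (by nlinarith)
    convert this using 1
    ring

lemma chain_dn (hN : 2 ≤ N) (hp : 2 ≤ p) (hXsat : SNSaturated N X) (j : ℕ) :
    ∀ y ∈ X, y < 1 - ((N:ℝ)^p)⁻¹ → (N:ℝ) * ((N:ℝ)^p)⁻¹ < y - (j:ℝ) * (((N:ℝ) - 1) * ((N:ℝ)^p)⁻¹) →
    y - (j:ℝ) * (((N:ℝ) - 1) * ((N:ℝ)^p)⁻¹) ∈ X := by
  set A : ℝ := ((N:ℝ)^p)⁻¹ with hA
  have h2 : (2:ℝ) ≤ (N:ℝ) := by exact_mod_cast hN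
  have hApos : 0 < A := Apos hN
  have hgpos : 0 < ((N:ℝ) - 1) * A := by nlinarith
  induction j with
  | zero => intro y hy _ _; simpa using hy
  | succ j ih =>
    intro y hy hy1 hy2
    push_cast at hy2 ⊢
    have hz : y - (j:ℝ) * (((N:ℝ) - 1) * A) ∈ X := ih y hy hy1 (by nlinarith)
    have := step_dn hN hp hXsat hz (by nlinarith) (by nlinarith)
    convert this using 1
    ring

lemma shift_le (c η s t : ℝ) (hs : 0 ≤ s) (ht : t + c ≤ 1)
    (Hbwd : ∀ x : ℝ, η < x → x + c < 1 - η → x + c ∈ X → x ∈ X) :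
    volume (X ∩ Ioo (s+c) (t+c)) ≤
      volume (X ∩ Ioo s t) + (ENNReal.ofReal η + ENNReal.ofReal η) := by
  have hsub : X ∩ Ioo (s+c) (t+c) ⊆
      ((fun y => y + -c) ⁻¹' (X ∩ Ioo s t)) ∪ (Ioc (s+c) (η+c) ∪ Ico (1-η) (t+c)) := by
    rintro y ⟨hyX, hy1, hy2⟩
    by_cases hb : η + c < y
    · by_cases hb2 : y < 1 - η
      · left
        refine ⟨Hbwd (y - c) (by linarith) (by linarith) (by simpa using hyX), ?_, ?_⟩ <;>
          simp only [mem_setOf_eq] <;> [linarith; linarith]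
      · right; right; exact ⟨by linarith, hy2⟩
    · right; left; exact ⟨hy1, by linarith⟩
  calc volume (X ∩ Ioo (s+c) (t+c))
      ≤ volume (((fun y => y + -c) ⁻¹' (X ∩ Ioo s t)) ∪ (Ioc (s+c) (η+c) ∪ Ico (1-η) (t+c))) :=
        measure_mono hsub
    _ ≤ volume ((fun y => y + -c) ⁻¹' (X ∩ Ioo s t)) + volume (Ioc (s+c) (η+c) ∪ Ico (1-η) (t+c)) :=
        measure_union_le _ _
    _ ≤ volume ((fun y => y + -c) ⁻¹' (X ∩ Ioo s t)) + (volume (Ioc (s+c) (η+c)) + volume (Ico (1-η) (t+c))) := by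
        gcongr
        exact measure_union_le _ _
    _ ≤ volume (X ∩ Ioo s t) + (ENNReal.ofReal η + ENNReal.ofReal η) := by
        rw [measure_preimage_add_right]
        gcongr
        · rw [Real.volume_Ioc]
          exact ENNReal.ofReal_le_ofReal (by linarith)
        · rw [Real.volume_Ico]
          exact ENNReal.ofReal_le_ofReal (by linarith)

lemma shift_ge (c η s t : ℝ) (hs : 0 ≤ s) (ht : t + c ≤ 1)
    (Hfwd : ∀ x : ℝ, η < x → x + c < 1 - η → x ∈ X → x + c ∈ X) :
    volume (X ∩ Ioo s t) ≤
      volume (X ∩ Ioo (s+c) (t+c)) + (ENNReal.ofReal η + ENNReal.ofReal η) := by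
  have hsub : X ∩ Ioo s t ⊆
      ((fun y => y + c) ⁻¹' (X ∩ Ioo (s+c) (t+c))) ∪ (Ioc s η ∪ Ico (1-η-c) t) := by
    rintro x ⟨hxX, hx1, hx2⟩
    by_cases hb : η < x
    · by_cases hb2 : x + c < 1 - η
      · left
        exact ⟨Hfwd x hb hb2 hxX, by simp only [mem_setOf_eq]; constructor <;> linarith⟩
      · right; right; exact ⟨by linarith, hx2⟩
    · right; left; exact ⟨hx1, by linarith⟩
  calc volume (X ∩ Ioo s t)
      ≤ volume (((fun y => y + c) ⁻¹' (X ∩ Ioo (s+c) (t+c))) ∪ (Ioc s η ∪ Ico (1-η-c) t)) :=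
        measure_mono hsub
    _ ≤ volume ((fun y => y + c) ⁻¹' (X ∩ Ioo (s+c) (t+c))) + volume (Ioc s η ∪ Ico (1-η-c) t) :=
        measure_union_le _ _
    _ ≤ volume ((fun y => y + c) ⁻¹' (X ∩ Ioo (s+c) (t+c))) + (volume (Ioc s η) + volume (Ico (1-η-c) t)) := by
        gcongr
        exact measure_union_le _ _
    _ ≤ volume (X ∩ Ioo (s+c) (t+c)) + (ENNReal.ofReal η + ENNReal.ofReal η) := by
        rw [measure_preimage_add_right]
        gcongr
        · rw [Real.volume_Ioc]
          exact ENNReal.ofReal_le_ofReal (by linarith)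
        · rw [Real.volume_Ico]
          exact ENNReal.ofReal_le_ofReal (by linarith)

lemma nudge (u v ℓ g : ℝ) (huv : u ≤ v) (hvg : v ≤ u + g) :
    volume (X ∩ Ioo v (v+ℓ)) ≤ volume (X ∩ Ioo u (u+ℓ)) + ENNReal.ofReal g := by
  have hsub : X ∩ Ioo v (v+ℓ) ⊆ (X ∩ Ioo u (u+ℓ)) ∪ Ico (u+ℓ) (v+ℓ) := by
    rintro y ⟨hyX, hy1, hy2⟩
    by_cases hb : y < u + ℓ
    · left; exact ⟨hyX, by linarith, hb⟩
    · right; exact ⟨by linarith, hy2⟩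
  calc volume (X ∩ Ioo v (v+ℓ)) ≤ volume ((X ∩ Ioo u (u+ℓ)) ∪ Ico (u+ℓ) (v+ℓ)) := measure_mono hsub
    _ ≤ volume (X ∩ Ioo u (u+ℓ)) + volume (Ico (u+ℓ) (v+ℓ)) := measure_union_le _ _
    _ ≤ volume (X ∩ Ioo u (u+ℓ)) + ENNReal.ofReal g := by
        gcongr
        rw [Real.volume_Ico]
        exact ENNReal.ofReal_le_ofReal (by linarith)

lemma nudge' (u v ℓ g : ℝ) (huv : u ≤ v) (hvg : v ≤ u + g) :
    volume (X ∩ Ioo u (u+ℓ)) ≤ volume (X ∩ Ioo v (v+ℓ)) + ENNReal.ofReal g := by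
  have hsub : X ∩ Ioo u (u+ℓ) ⊆ (X ∩ Ioo v (v+ℓ)) ∪ Ioc u v := by
    rintro y ⟨hyX, hy1, hy2⟩
    by_cases hb : v < y
    · left; exact ⟨hyX, hb, by linarith⟩
    · right; exact ⟨hy1, by linarith⟩
  calc volume (X ∩ Ioo u (u+ℓ)) ≤ volume ((X ∩ Ioo v (v+ℓ)) ∪ Ioc u v) := measure_mono hsub
    _ ≤ volume (X ∩ Ioo v (v+ℓ)) + volume (Ioc u v) := measure_union_le _ _
    _ ≤ volume (X ∩ Ioo v (v+ℓ)) + ENNReal.ofReal g := by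
        gcongr
        rw [Real.volume_Ioc]
        exact ENNReal.ofReal_le_ofReal (by linarith)

lemma icc_ioo (a b : ℝ) : volume (X ∩ Icc a b) = volume (X ∩ Ioo a b) := by
  apply le_antisymm
  · have hsub : X ∩ Icc a b ⊆ (X ∩ Ioo a b) ∪ ({a} ∪ {b}) := by
      rintro y ⟨hyX, hy1, hy2⟩
      rcases eq_or_lt_of_le hy1 with h | h
      · right; left; simp [h.symm]
      rcases eq_or_lt_of_le hy2 with h2 | h2
      · right; right; simp [h2]
      · left; exact ⟨hyX, h, h2⟩
    calc volume (X ∩ Icc a b) ≤ volume ((X ∩ Ioo a b) ∪ ({a} ∪ {b})) := measure_mono hsub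
      _ ≤ volume (X ∩ Ioo a b) + volume ({a} ∪ {b} : Set ℝ) := measure_union_le _ _
      _ = volume (X ∩ Ioo a b) := by
          have : volume ({a} ∪ {b} : Set ℝ) = 0 :=
            measure_union_null (measure_singleton a) (measure_singleton b)
          rw [this, add_zero]
  · exact measure_mono (inter_subset_inter_right X Ioo_subset_Icc_self)

end S9

/-- If `X ⊆ [0,1]` is a Borel `S_N`-saturated set, then for all `N`-adic
rationals `0 < d₁ < d₂ < 1` one has `λ(X ∩ [d₁,d₂]) = λ(X ∩ [0, d₂−d₁])`. -/
theorem statement9 (N : ℕ) (hN : 2 ≤ N) (X : Set ℝ) (hX : X ⊆ Set.Icc (0 : ℝ) 1)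
    (hXmeas : MeasurableSet X) (hXsat : SNSaturated N X)
    (d₁ d₂ : ℝ) (h1 : IsNAdic N d₁) (h2 : IsNAdic N d₂)
    (h01 : 0 < d₁) (h12 : d₁ < d₂) (h21 : d₂ < 1) :
    MeasureTheory.volume (X ∩ Set.Icc d₁ d₂) =
      MeasureTheory.volume (X ∩ Set.Icc 0 (d₂ - d₁)) := by
  have h2N : (2:ℝ) ≤ (N:ℝ) := by exact_mod_cast hN
  rw [S9.icc_ioo, S9.icc_ioo]
  have hdd : d₁ + (d₂ - d₁) = d₂ := by ring
  have key : ∀ ε : NNReal, 0 < ε →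
      volume (X ∩ Ioo d₁ d₂) ≤ volume (X ∩ Ioo 0 (d₂ - d₁)) + ε ∧
      volume (X ∩ Ioo 0 (d₂ - d₁)) ≤ volume (X ∩ Ioo d₁ d₂) + ε := by
    intro ε hε
    have hεR : (0:ℝ) < (ε:ℝ) := hε
    obtain ⟨p₀, hp₀⟩ := pow_unbounded_of_one_lt ((3*(N:ℝ)+1)/(ε:ℝ)) (show (1:ℝ) < (N:ℝ) by linarith)
    set p := max 2 p₀ with hpdef
    have hp2 : 2 ≤ p := le_max_left _ _
    set A : ℝ := ((N:ℝ)^p)⁻¹ with hA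
    have hApos : 0 < A := S9.Apos hN
    have hAcancel : (N:ℝ)^p * A = 1 := by rw [hA]; exact mul_inv_cancel₀ (by positivity)
    have hmono : (N:ℝ)^p₀ ≤ (N:ℝ)^p := pow_le_pow_right₀ (by linarith) (le_max_right _ _)
    have hsmall : (3*(N:ℝ)+1) * A < (ε:ℝ) := by
      have h1' : 3*(N:ℝ)+1 < (ε:ℝ) * (N:ℝ)^p := by
        have := (div_lt_iff₀ hεR).mp (lt_of_lt_of_le hp₀ hmono)
        linarith [this]
      nlinarith
    set g : ℝ := ((N:ℝ) - 1) * A with hg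
    set η : ℝ := (N:ℝ) * A with hη
    have hgpos : 0 < g := by rw [hg]; nlinarith
    have hηpos : 0 < η := by rw [hη]; nlinarith
    have hAη : A ≤ η := by rw [hη]; nlinarith
    have hgη : g ≤ η := by rw [hg, hη]; nlinarith
    set j : ℕ := ⌊d₁ / g⌋₊ with hj
    set c : ℝ := (j:ℝ) * g with hc
    have hc0 : 0 ≤ c := by rw [hc]; positivity
    have hc1 : c ≤ d₁ := by
      rw [hc]
      rw [← le_div_iff₀ hgpos]
      exact Nat.floor_le (by positivity)
    have hc2 : d₁ < c + g := by
      have := Nat.lt_floor_add_one (d₁ / g)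
      rw [hc]
      rw [div_lt_iff₀ hgpos] at this
      linarith [this]
    have Hfwd : ∀ x : ℝ, η < x → x + c < 1 - η → x ∈ X → x + c ∈ X := by
      intro x hx1 hx2 hxX
      exact S9.chain_up hN hp2 hXsat j x hxX (lt_of_le_of_lt hAη hx1) (by rw [← hg, ← hc]; linarith)
    have Hbwd : ∀ x : ℝ, η < x → x + c < 1 - η → x + c ∈ X → x ∈ X := by
      intro x hx1 hx2 hyX
      have := S9.chain_dn hN hp2 hXsat j (x + c) hyX
        (by rw [← hA]; linarith) (by rw [← hg, ← hc, ← hη]; ring_nf; linarith)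
      have heq : x + c - (j:ℝ) * (((N:ℝ) - 1) * ((N:ℝ)^p)⁻¹) = x := by
        rw [← hA, ← hg, ← hc]; ring
      rwa [heq] at this
    have ineq1 : volume (X ∩ Ioo d₁ d₂) ≤ volume (X ∩ Ioo c (c + (d₂ - d₁))) + ENNReal.ofReal g := by
      have := S9.nudge (X := X) c d₁ (d₂ - d₁) g hc1 (le_of_lt hc2)
      rwa [hdd] at this
    have ineq1' : volume (X ∩ Ioo c (c + (d₂ - d₁))) ≤ volume (X ∩ Ioo d₁ d₂) + ENNReal.ofReal g := by
      have := S9.nudge' (X := X) c d₁ (d₂ - d₁) g hc1 (le_of_lt hc2)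
      rwa [hdd] at this
    have hto : (0:ℝ) + c = c := by ring
    have hto2 : (d₂ - d₁) + c = c + (d₂ - d₁) := by ring
    have ineq2 : volume (X ∩ Ioo c (c + (d₂ - d₁))) ≤
        volume (X ∩ Ioo 0 (d₂ - d₁)) + (ENNReal.ofReal η + ENNReal.ofReal η) := by
      have := S9.shift_le (X := X) c η 0 (d₂ - d₁) le_rfl (by linarith) Hbwd
      rwa [hto, hto2] at this
    have ineq2' : volume (X ∩ Ioo 0 (d₂ - d₁)) ≤
        volume (X ∩ Ioo c (c + (d₂ - d₁))) + (ENNReal.ofReal η + ENNReal.ofReal η) := by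
      have := S9.shift_ge (X := X) c η 0 (d₂ - d₁) le_rfl (by linarith) Hfwd
      rwa [hto, hto2] at this
    have herr : ENNReal.ofReal g + (ENNReal.ofReal η + ENNReal.ofReal η) ≤ (ε : ENNReal) := by
      rw [← ENNReal.ofReal_add hηpos.le hηpos.le, ← ENNReal.ofReal_add hgpos.le (by positivity)]
      rw [← ENNReal.ofReal_coe_nnreal]
      apply ENNReal.ofReal_le_ofReal
      have : g + (η + η) ≤ (3*(N:ℝ)+1) * A := by rw [hg, hη]; nlinarith
      linarith [hsmall]
    constructor
    · calc volume (X ∩ Ioo d₁ d₂)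
          ≤ volume (X ∩ Ioo c (c + (d₂ - d₁))) + ENNReal.ofReal g := ineq1
        _ ≤ (volume (X ∩ Ioo 0 (d₂ - d₁)) + (ENNReal.ofReal η + ENNReal.ofReal η)) + ENNReal.ofReal g := by
            gcongr
        _ = volume (X ∩ Ioo 0 (d₂ - d₁)) + (ENNReal.ofReal g + (ENNReal.ofReal η + ENNReal.ofReal η)) := by
            ring
        _ ≤ volume (X ∩ Ioo 0 (d₂ - d₁)) + ε := by gcongr
    · calc volume (X ∩ Ioo 0 (d₂ - d₁))
          ≤ volume (X ∩ Ioo c (c + (d₂ - d₁))) + (ENNReal.ofReal η + ENNReal.ofReal η) := ineq2'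
        _ ≤ (volume (X ∩ Ioo d₁ d₂) + ENNReal.ofReal g) + (ENNReal.ofReal η + ENNReal.ofReal η) := by
            gcongr
        _ = volume (X ∩ Ioo d₁ d₂) + (ENNReal.ofReal g + (ENNReal.ofReal η + ENNReal.ofReal η)) := by
            ring
        _ ≤ volume (X ∩ Ioo d₁ d₂) + ε := by gcongr
  apply le_antisymm
  · exact ENNReal.le_of_forall_pos_le_add (fun ε hε _ => (key ε hε).1)
  · exact ENNReal.le_of_forall_pos_le_add (fun ε hε _ => (key ε hε).2)
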